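/- Let x be a uniformly recurrent aperiodic infinite word containing infinitely many distinct palindromic factors. Then x has infinitely many abelian unbordered factors. -/

import Mathlib

def factor {α : Type*} (w : ℕ → α) (i n : ℕ) : List α :=
  (List.range n).map (fun k => w (i + k))

def IsFactor {α : Type*} (u : List α) (w : ℕ → α) : Prop :=
  ∃ i, factor w i u.length = u

def AbelianEquiv {α : Type*} [DecidableEq α] (u v : List α) : Prop :=
  ∀ a : α, u.count a = v.count a

def AbelianBordered {α : Type*} [DecidableEq α] (u : List α) : Prop :=
  ∃ p s : List α, p <+: u ∧ s <:+ u ∧ p ≠ [] ∧ p.length < u.length ∧ AbelianEquiv p s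

/-- `x` is uniformly recurrent: every factor occurs in every window of some length `M`. -/
def UniformlyRecurrent {α : Type*} (x : ℕ → α) : Prop :=
  ∀ u : List α, IsFactor u x → ∃ M, ∀ i, ∃ j, j + u.length ≤ M ∧ factor x (i + j) u.length = u

def UltimatelyPeriodic {α : Type*} (w : ℕ → α) : Prop :=
  ∃ p N, 0 < p ∧ ∀ n, N ≤ n → w (n + p) = w n

lemma factor_length {α : Type*} (w : ℕ → α) (i n : ℕ) : (factor w i n).length = n := by
  simp [factor]

lemma factor_cons {α : Type*} (w : ℕ → α) (i n : ℕ) :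
    factor w i (n + 1) = w i :: factor w (i + 1) n := by
  simp only [factor, List.range_succ_eq_map, List.map_cons, List.map_map, Nat.add_zero]
  congr 1
  refine List.map_congr_left fun k _ => ?_
  simp only [Function.comp_apply]
  congr 1
  omega

lemma factor_snoc {α : Type*} (w : ℕ → α) (i n : ℕ) :
    factor w i (n + 1) = factor w i n ++ [w (i + n)] := by
  simp [factor, List.range_succ]

lemma abelianEquiv_length {α : Type*} [DecidableEq α] {p s : List α}
    (h : AbelianEquiv p s) : p.length = s.length := by
  have hm : (↑p : Multiset α) = ↑s := by
    ext a
    simpa [Multiset.coe_count] using h a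
  simpa using congrArg Multiset.card hm

lemma lemA {α : Type*} [DecidableEq α] (P : List α) (a b : α) (hP : P.reverse = P)
    (hab : a ≠ b) : ¬ AbelianBordered (a :: (P ++ [b])) := by
  rintro ⟨p, s, hpre, hsuf, hne, hlt, heq⟩
  have hlen : p.length = s.length := abelianEquiv_length heq
  have hulen : (a :: (P ++ [b])).length = P.length + 2 := by simp
  obtain ⟨k', hk'⟩ : ∃ k', p.length = k' + 1 := by
    cases p with
    | nil => exact absurd rfl hne
    | cons c t => exact ⟨t.length, by simp⟩
  have hk'le : k' ≤ P.length := by omega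
  have hp : p = a :: P.take k' := by
    have := List.prefix_iff_eq_take.mp hpre
    rw [hk'] at this
    rw [this]
    simp [List.take_append_of_le_length hk'le]
  have hs : s = (P.take k').reverse ++ [b] := by
    have h1 := List.suffix_iff_eq_drop.mp hsuf
    rw [← hlen, hk', hulen] at h1
    have h2 : P.length + 2 - (k' + 1) = (P.length - k') + 1 := by omega
    rw [h2] at h1
    rw [h1]
    rw [List.drop_succ_cons, List.drop_append_of_le_length (by omega)]
    congr 1
    rw [List.reverse_take, hP]
  have hcount := heq a
  rw [hp, hs] at hcount
  simp [List.count_cons, List.count_append, List.count_reverse, hab] at hcount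
  exact hab hcount.symm

lemma finite_lists {α : Type*} {S : Set α} (hS : S.Finite) (N : ℕ) :
    {l : List α | (∀ a ∈ l, a ∈ S) ∧ l.length ≤ N}.Finite := by
  induction N with
  | zero =>
    apply Set.Finite.subset (Set.finite_singleton ([] : List α))
    rintro l ⟨-, h2⟩
    simpa using List.length_eq_zero_iff.mp (by omega)
  | succ N ih =>
    apply Set.Finite.subset ((Set.Finite.image2 List.cons hS ih).insert [])
    rintro l ⟨h1, h2⟩
    cases l with
    | nil => simp
    | cons c t =>
      right
      exact ⟨c, h1 c (by simp), t, ⟨fun a ha => h1 a (by simp [ha]), by simpa using h2⟩, rfl⟩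

/-- A uniformly recurrent aperiodic word with infinitely many palindromic factors
has infinitely many abelian unbordered factors. -/
theorem stmt_13 {α : Type*} [DecidableEq α] (x : ℕ → α)
    (hur : UniformlyRecurrent x) (hap : ¬ UltimatelyPeriodic x)
    (hpal : {u : List α | IsFactor u x ∧ u.reverse = u}.Infinite) :
    {u : List α | IsFactor u x ∧ ¬ AbelianBordered u}.Infinite := by
  by_contra hinf
  rw [Set.not_infinite] at hinf
  by_cases hrange : (Set.range x).Finite
  · -- main case: finite alphabet
    -- bound on lengths of abelian unbordered factors
    obtain ⟨L, hL0⟩ := (hinf.image List.length).bddAbove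
    have hL : ∀ u : List α, IsFactor u x → ¬ AbelianBordered u → u.length ≤ L := by
      intro u h1 h2
      exact hL0 ⟨u, ⟨h1, h2⟩, rfl⟩
    -- arbitrarily long palindromic factors
    have hlong : ∀ N, ∃ u : List α, IsFactor u x ∧ u.reverse = u ∧ N < u.length := by
      intro N
      by_contra hcon
      push_neg at hcon
      apply hpal
      apply Set.Finite.subset (finite_lists hrange N)
      rintro u ⟨hf, hpu⟩
      refine ⟨?_, hcon u hf hpu⟩
      obtain ⟨i, hi⟩ := hf
      intro a ha
      rw [← hi] at ha
      simp only [factor, List.mem_map, List.mem_range] at ha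
      obtain ⟨k, -, hk⟩ := ha
      exact ⟨i + k, hk⟩
    obtain ⟨P0, hP0f, hP0pal, hP0len⟩ := hlong (max L 1)
    have hnL : L ≤ P0.length := lt_of_lt_of_le (lt_of_le_of_lt (le_max_left _ _) hP0len) le_rfl |>.le
    have hn1 : 1 ≤ P0.length := lt_of_le_of_lt (le_max_right _ _) hP0len |>.le
    set n := P0.length with hn
    obtain ⟨M, hM⟩ := hur P0 hP0f
    choose jj hjj1 hjj2 using hM
    set q : ℕ → ℕ := fun i => i + jj i with hq
    have hqge : ∀ i, i ≤ q i := fun i => Nat.le_add_right _ _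
    have hqle : ∀ i, q i ≤ i + M := fun i => by have := hjj1 i; simp only [hq]; omega
    have hqpal : ∀ i, (factor x (q i) n).reverse = factor x (q i) n := by
      intro i
      have : factor x (q i) n = P0 := hjj2 i
      rw [this]; exact hP0pal
    -- extension step : a palindromic factor extends to a palindromic factor
    have step : ∀ i m, L ≤ m → (factor x (i + 1) m).reverse = factor x (i + 1) m →
        (factor x i (m + 2)).reverse = factor x i (m + 2) := by
      intro i m hm hpal'
      have hfac : factor x i (m + 2) = x i :: (factor x (i + 1) m ++ [x (i + 1 + m)]) := by
        rw [show m + 2 = (m + 1) + 1 from rfl, factor_cons, factor_snoc]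
      by_cases hab : x i = x (i + 1 + m)
      · rw [hfac, ← hab]
        simp [List.reverse_append, hpal']
      · exfalso
        have hmem : (factor x i (m + 2)).length ≤ L := by
          apply hL
          · exact ⟨i, by rw [factor_length]⟩
          · rw [hfac]; exact lemA _ _ _ hpal' hab
        rw [factor_length] at hmem
        omega
    -- descend to position 0
    have desc : ∀ k i m, L ≤ m → k ≤ i →
        (factor x i m).reverse = factor x i m →
        (factor x (i - k) (m + 2 * k)).reverse = factor x (i - k) (m + 2 * k) := by
      intro k
      induction k with
      | zero => intro i m _ _ h; simpa using h
      | succ k ih =>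
        intro i m hm hki h
        have h1 := ih i m hm (by omega) h
        have h2 := step (i - (k + 1)) (m + 2 * k) (by omega)
          (by rw [show i - (k + 1) + 1 = i - k by omega]; exact h1)
        rw [show m + 2 * (k + 1) = m + 2 * k + 2 by ring]
        exact h2
    -- reflection from a palindromic prefix
    have reflect : ∀ m, (factor x 0 m).reverse = factor x 0 m →
        ∀ j, j < m → x j = x (m - 1 - j) := by
      intro m hm j hj
      have hlen : (factor x 0 m).length = m := factor_length x 0 m
      have h1 : (factor x 0 m).reverse[j]'(by simpa [hlen]) =
          (factor x 0 m)[j]'(by simpa [hlen]) := by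
        simp only [hm]
      rw [List.getElem_reverse] at h1
      simp only [hlen] at h1
      simpa [factor] using h1.symm
    have hrefl : ∀ i, ∀ j, j < n + 2 * q i → x j = x (n + 2 * q i - 1 - j) := by
      intro i
      have h1 := desc (q i) (q i) n hnL le_rfl (hqpal i)
      rw [Nat.sub_self] at h1
      exact reflect _ h1
    -- two reflections give a period
    have pair : ∀ m1 m2 : ℕ, 1 ≤ m1 → m1 ≤ m2 → (∀ j, j < m1 → x j = x (m1 - 1 - j)) →
        (∀ j, j < m2 → x j = x (m2 - 1 - j)) → ∀ j, j < m1 → x (j + (m2 - m1)) = x j := by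
      intro m1 m2 hm1 h12 h1 h2 j hj
      have e1 := h1 j hj
      have e2 := h2 (m1 - 1 - j) (by omega)
      rw [show m2 - 1 - (m1 - 1 - j) = j + (m2 - m1) by omega] at e2
      rw [e1, e2]
    have hper : ∀ i, ∀ j, j < n + 2 * q i →
        x (j + 2 * (q (q i + 1) - q i)) = x j := by
      intro i j hj
      have hlt : q i < q (q i + 1) := lt_of_lt_of_le (Nat.lt_succ_self _) (hqge _)
      have h := pair (n + 2 * q i) (n + 2 * q (q i + 1)) (by omega) (by omega)
        (hrefl i) (hrefl (q i + 1)) j hj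
      rw [show n + 2 * q (q i + 1) - (n + 2 * q i) = 2 * (q (q i + 1) - q i) by omega] at h
      exact h
    -- pigeonhole on the gap
    set d : ℕ → ℕ := fun i => q (q i + 1) - q i with hd
    have hdle : ∀ i, d i ≤ M + 1 := by
      intro i
      have h1 := hqle (q i + 1)
      have h2 := hqge i
      simp only [hd]
      omega
    have hdpos : ∀ i, 1 ≤ d i := by
      intro i
      have h1 := hqge (q i + 1)
      simp only [hd]
      omega
    obtain ⟨y, hy⟩ :=
      Finite.exists_infinite_fiber (fun i => (⟨d i, by have := hdle i; omega⟩ : Fin (M + 2)))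
    rw [Set.infinite_coe_iff] at hy
    apply hap
    refine ⟨2 * (y : ℕ), 0, ?_, ?_⟩
    · obtain ⟨i, hi⟩ := hy.nonempty
      simp only [Set.mem_preimage, Set.mem_singleton_iff] at hi
      have hdi : d i = (y : ℕ) := congrArg Fin.val hi
      have := hdpos i
      omega
    · intro j _
      obtain ⟨i, hi, hij⟩ := hy.exists_gt j
      simp only [Set.mem_preimage, Set.mem_singleton_iff] at hi
      have hdi : d i = (y : ℕ) := congrArg Fin.val hi
      have h := hper i j (by have := hqge i; omega)
      rw [show q (q i + 1) - q i = (y : ℕ) from hdi] at h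
      exact h
  · -- infinite alphabet: single letters are abelian unbordered
    rw [← Set.not_infinite] at hinf
    apply hinf
    have hsub : (fun a => [a]) '' Set.range x ⊆ {u : List α | IsFactor u x ∧ ¬ AbelianBordered u} := by
      rintro - ⟨a, ⟨i, rfl⟩, rfl⟩
      constructor
      · exact ⟨i, by simp [factor, List.range_succ]⟩
      · rintro ⟨p, s, hpre, hsuf, hne, hlt, -⟩
        have h1 : 1 ≤ p.length := List.length_pos_iff.mpr hne
        have h2 : p.length < 1 := by simpa using hlt
        omega
    have hri : (Set.range x).Infinite := hrange
    exact Set.Infinite.mono hsub (hri.image (fun a _ b _ h => by simpa using h))
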